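/- arXiv:1510.02396 — 6 statements merged into one kernel-verified Lean document; each statement's English description precedes it below -/
import Mathlib

section
/- Let g, h₀, k > 0, γ ∈ ℝ, let U(y) = γy on [0,h₀], and let c > max_{0≤y≤h₀} U(y) (so that c − γh₀ > 0 and c − γy ≠ 0 on [0,h₀]). The bifurcation problem — find φ ∈ C²([0,h₀]) with (γy − c)(φ''(y) − k²φ(y)) = 0 for 0 < y < h₀, φ(0) = 0, and φ'(h₀) = (g/(γh₀−c)² + γ/(γh₀−c))·φ(h₀) — admits a solution φ that is not identically zero if and only if c − γh₀ = −γ·tanh(k h₀)/(2k) + √(γ²tanh²(k h₀)/(4k²) + g·tanh(k h₀)/k), equivalently if and only if k(c−γh₀)² + γ·tanh(k h₀)(c−γh₀) − g·tanh(k h₀) = 0 (the dispersion relation for constant vorticity −γ). -/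
open Real Set

lemma aux_sol (h₀ k : ℝ) (hh₀ : 0 < h₀) (φ : ℝ → ℝ) (hφ : ContDiff ℝ 2 φ)
    (hode : ∀ y ∈ Set.Ioo (0:ℝ) h₀, deriv (deriv φ) y = k^2 * φ y) (h0 : φ 0 = 0) :
    (∀ y ∈ Set.Icc (0:ℝ) h₀, k * φ y = deriv φ 0 * Real.sinh (k*y)) ∧
    deriv φ h₀ = deriv φ 0 * Real.cosh (k*h₀) := by
  have h2 : ContDiff ℝ (1+1) φ := by norm_num; exact hφ
  obtain ⟨hd1, -, hd2c⟩ := contDiff_succ_iff_deriv.mp h2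
  obtain ⟨hd2, hd3c⟩ := contDiff_one_iff_deriv.mp hd2c
  have hode' : ∀ y ∈ Set.Icc (0:ℝ) h₀, deriv (deriv φ) y = k^2 * φ y := by
    have heq : Set.EqOn (deriv (deriv φ)) (fun y => k^2 * φ y) (closure (Set.Ioo (0:ℝ) h₀)) :=
      (Set.EqOn.closure (fun y hy => hode y hy) hd3c (continuous_const.mul hd1.continuous))
    intro y hy
    have := heq (by rw [closure_Ioo hh₀.ne]; exact hy)
    simpa using this
  have hsk : ∀ y : ℝ, HasDerivAt (fun y => Real.sinh (k*y)) (k * Real.cosh (k*y)) y := by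
    intro y
    have := (Real.hasDerivAt_sinh (k*y)).comp y ((hasDerivAt_id y).const_mul k)
    simpa [mul_comm, Function.comp_def] using this
  have hck : ∀ y : ℝ, HasDerivAt (fun y => Real.cosh (k*y)) (k * Real.sinh (k*y)) y := by
    intro y
    have := (Real.hasDerivAt_cosh (k*y)).comp y ((hasDerivAt_id y).const_mul k)
    simpa [mul_comm, Function.comp_def] using this
  set W : ℝ → ℝ := fun y => deriv φ y * Real.cosh (k*y) - k * φ y * Real.sinh (k*y) with hWdef
  set Z : ℝ → ℝ := fun y => deriv φ y * Real.sinh (k*y) - k * φ y * Real.cosh (k*y) with hZdef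
  have hW : ∀ y ∈ Set.Icc (0:ℝ) h₀, HasDerivAt W 0 y := by
    intro y hy
    have h1 : HasDerivAt W
        ((deriv (deriv φ) y * Real.cosh (k*y) + deriv φ y * (k * Real.sinh (k*y)))
          - ((k * deriv φ y) * Real.sinh (k*y) + (k * φ y) * (k * Real.cosh (k*y)))) y :=
      (((hd2 y).hasDerivAt.mul (hck y)).sub
        ((((hd1 y).hasDerivAt).const_mul k).mul (hsk y)))
    have : (deriv (deriv φ) y * Real.cosh (k*y) + deriv φ y * (k * Real.sinh (k*y)))
          - ((k * deriv φ y) * Real.sinh (k*y) + (k * φ y) * (k * Real.cosh (k*y))) = 0 := by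
      rw [hode' y hy]; ring
    rwa [this] at h1
  have hZ : ∀ y ∈ Set.Icc (0:ℝ) h₀, HasDerivAt Z 0 y := by
    intro y hy
    have h1 : HasDerivAt Z
        ((deriv (deriv φ) y * Real.sinh (k*y) + deriv φ y * (k * Real.cosh (k*y)))
          - ((k * deriv φ y) * Real.cosh (k*y) + (k * φ y) * (k * Real.sinh (k*y)))) y :=
      (((hd2 y).hasDerivAt.mul (hsk y)).sub
        ((((hd1 y).hasDerivAt).const_mul k).mul (hck y)))
    have : (deriv (deriv φ) y * Real.sinh (k*y) + deriv φ y * (k * Real.cosh (k*y)))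
          - ((k * deriv φ y) * Real.cosh (k*y) + (k * φ y) * (k * Real.sinh (k*y))) = 0 := by
      rw [hode' y hy]; ring
    rwa [this] at h1
  have hWconst : ∀ y ∈ Set.Icc (0:ℝ) h₀, W y = W 0 :=
    constant_of_has_deriv_right_zero
      (fun y hy => ((hW y hy).continuousAt.continuousWithinAt))
      (fun y hy => (hW y (Set.mem_Icc_of_Ico hy)).hasDerivWithinAt)
  have hZconst : ∀ y ∈ Set.Icc (0:ℝ) h₀, Z y = Z 0 :=
    constant_of_has_deriv_right_zero
      (fun y hy => ((hZ y hy).continuousAt.continuousWithinAt))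
      (fun y hy => (hZ y (Set.mem_Icc_of_Ico hy)).hasDerivWithinAt)
  have hW0 : W 0 = deriv φ 0 := by simp [hWdef, h0]
  have hZ0 : Z 0 = 0 := by simp [hZdef, h0]
  have key : ∀ y ∈ Set.Icc (0:ℝ) h₀, k * φ y = deriv φ 0 * Real.sinh (k*y) := by
    intro y hy
    have hw := hWconst y hy; rw [hW0] at hw
    have hz := hZconst y hy; rw [hZ0] at hz
    -- Z y = 0 : φ' sinh = k φ cosh ; W y = φ'(0)
    have hz' : deriv φ y * Real.sinh (k*y) = k * φ y * Real.cosh (k*y) := by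
      have := hz; simp only [hZdef] at this; linarith
    have hw' : deriv φ y * Real.cosh (k*y) - k * φ y * Real.sinh (k*y) = deriv φ 0 := hw
    have hpy : Real.cosh (k*y)^2 - Real.sinh (k*y)^2 = 1 := Real.cosh_sq_sub_sinh_sq (k*y)
    linear_combination Real.sinh (k*y) * hw' - Real.cosh (k*y) * hz' - (k * φ y) * hpy
  refine ⟨key, ?_⟩
  have hh : h₀ ∈ Set.Icc (0:ℝ) h₀ := ⟨hh₀.le, le_rfl⟩
  have hw := hWconst h₀ hh; rw [hW0] at hw
  have hz := hZconst h₀ hh; rw [hZ0] at hz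
  have hkey := key h₀ hh
  have hz' : deriv φ h₀ * Real.sinh (k*h₀) = k * φ h₀ * Real.cosh (k*h₀) := by
    have := hz; simp only [hZdef] at this; linarith
  have hw' : deriv φ h₀ * Real.cosh (k*h₀) - k * φ h₀ * Real.sinh (k*h₀) = deriv φ 0 := hw
  have hpy : Real.cosh (k*h₀)^2 - Real.sinh (k*h₀)^2 = 1 := Real.cosh_sq_sub_sinh_sq (k*h₀)
  have hcpos : 0 < Real.cosh (k*h₀) := Real.cosh_pos (k*h₀)
  have hmul : Real.cosh (k*h₀) * deriv φ h₀ = Real.cosh (k*h₀) * (deriv φ 0 * Real.cosh (k*h₀)) := by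
    linear_combination hw' + Real.sinh (k*h₀) * hkey - deriv φ 0 * hpy
  exact mul_left_cancel₀ (ne_of_gt hcpos) hmul

-- quadratic ↔ sqrt form
lemma aux_quad (g k γ T s : ℝ) (hg : 0 < g) (hk : 0 < k) (hT : 0 < T) (hs : 0 < s) :
    (k * s^2 + γ * T * s - g * T = 0 ↔
      s = -(γ * T) / (2*k) + Real.sqrt (γ^2 * T^2 / (4*k^2) + g * T / k)) := by
  set a : ℝ := γ * T / (2*k) with ha
  have hrad : γ^2 * T^2 / (4*k^2) + g * T / k = a^2 + g*T/k := by
    rw [ha]; ring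
  have hradnn : (0:ℝ) ≤ a^2 + g*T/k := by positivity
  rw [hrad]
  constructor
  · intro hq
    have hsa : 0 < s + a := by
      have h1 : s * (k*s + γ*T) = g*T := by linarith [hq]
      have h2 : 0 < k*s + γ*T := by
        by_contra h
        push_neg at h
        nlinarith
      have h3 : 0 < 2*k*s + γ*T := by nlinarith
      have hk' : (0:ℝ) < 2*k := by linarith
      have h4 := div_pos h3 hk'
      rw [ha]
      rwa [show (2*k*s+γ*T)/(2*k) = s + γ*T/(2*k) by field_simp] at h4
    have hk0 : (k:ℝ) ≠ 0 := ne_of_gt hk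
    have hgk : k * (g*T/k) = g*T := by field_simp
    have h2ka : 2*k*a = γ*T := by rw [ha]; field_simp
    have hsqk : k * ((s+a)^2) = k * (a^2 + g*T/k) := by
      rw [mul_add, hgk]
      linear_combination hq + s * h2ka
    have hsq : a^2 + g*T/k = (s+a)^2 := (mul_left_cancel₀ hk0 hsqk).symm
    rw [hsq, Real.sqrt_sq hsa.le]
    ring
  · intro hsol
    have hr : Real.sqrt (a^2 + g*T/k) = s + a := by rw [hsol]; ring
    have hsq : (s+a)^2 = a^2 + g*T/k := by rw [← hr, Real.sq_sqrt hradnn]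
    have hk0 : (k:ℝ) ≠ 0 := ne_of_gt hk
    have hgk : k * (g*T/k) = g*T := by field_simp
    have h2ka : 2*k*a = γ*T := by rw [ha]; field_simp
    have hsqk : k * ((s+a)^2) = k * a^2 + g*T := by
      rw [hsq, mul_add, hgk]
    linear_combination hsqk - s * h2ka

/-- For the linear shear flow `U(y) = γy` with `c > max U`, the bifurcation
problem `(γy - c)(φ'' - k²φ) = 0` on `(0,h₀)`, `φ(0) = 0`,
`φ'(h₀) = (g/(γh₀-c)² + γ/(γh₀-c))·φ(h₀)` admits a nontrivial solution iff the
constant-vorticity dispersion relation holds (in either of its two equivalent forms). -/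
theorem stmt1 (g h₀ k γ c : ℝ) (hg : 0 < g) (hh₀ : 0 < h₀) (hk : 0 < k)
    (hc : ∀ y ∈ Set.Icc (0 : ℝ) h₀, γ * y < c) :
    ((∃ φ : ℝ → ℝ, ContDiff ℝ 2 φ ∧
        (∀ y ∈ Set.Ioo (0 : ℝ) h₀, (γ * y - c) * (deriv (deriv φ) y - k ^ 2 * φ y) = 0) ∧
        φ 0 = 0 ∧
        deriv φ h₀ = (g / (γ * h₀ - c) ^ 2 + γ / (γ * h₀ - c)) * φ h₀ ∧
        ∃ y ∈ Set.Icc (0 : ℝ) h₀, φ y ≠ 0) ↔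
      c - γ * h₀ = -(γ * Real.tanh (k * h₀)) / (2 * k) +
        Real.sqrt (γ ^ 2 * Real.tanh (k * h₀) ^ 2 / (4 * k ^ 2)
          + g * Real.tanh (k * h₀) / k)) ∧
    ((∃ φ : ℝ → ℝ, ContDiff ℝ 2 φ ∧
        (∀ y ∈ Set.Ioo (0 : ℝ) h₀, (γ * y - c) * (deriv (deriv φ) y - k ^ 2 * φ y) = 0) ∧
        φ 0 = 0 ∧
        deriv φ h₀ = (g / (γ * h₀ - c) ^ 2 + γ / (γ * h₀ - c)) * φ h₀ ∧
        ∃ y ∈ Set.Icc (0 : ℝ) h₀, φ y ≠ 0) ↔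
      k * (c - γ * h₀) ^ 2 + γ * Real.tanh (k * h₀) * (c - γ * h₀)
        - g * Real.tanh (k * h₀) = 0) := by
  set T : ℝ := Real.tanh (k * h₀) with hT
  set s : ℝ := c - γ * h₀ with hsdef
  clear_value T s
  have hkh : 0 < k * h₀ := mul_pos hk hh₀
  have hTpos : 0 < T := by rw [hT, Real.tanh_eq_sinh_div_cosh]; positivity
  have hspos : 0 < s := by
    have := hc h₀ ⟨hh₀.le, le_rfl⟩
    rw [hsdef]; linarith
  have hcoshpos : 0 < Real.cosh (k * h₀) := Real.cosh_pos (k * h₀)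
  have hsinhpos : 0 < Real.sinh (k * h₀) := Real.sinh_pos_iff.mpr hkh
  have hTdef : T = Real.sinh (k*h₀) / Real.cosh (k*h₀) := by
    rw [hT, Real.tanh_eq_sinh_div_cosh]
  have hs0 : s ≠ 0 := ne_of_gt hspos
  have hns0 : -s ≠ 0 := neg_ne_zero.mpr (ne_of_gt hspos)
  have hk0 : k ≠ 0 := ne_of_gt hk
  have hc0 : Real.cosh (k*h₀) ≠ 0 := ne_of_gt hcoshpos
  have hgh : γ * h₀ - c = -s := by rw [hsdef]; ring
  have hmain : (∃ φ : ℝ → ℝ, ContDiff ℝ 2 φ ∧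
        (∀ y ∈ Set.Ioo (0 : ℝ) h₀, (γ * y - c) * (deriv (deriv φ) y - k ^ 2 * φ y) = 0) ∧
        φ 0 = 0 ∧
        deriv φ h₀ = (g / (γ * h₀ - c) ^ 2 + γ / (γ * h₀ - c)) * φ h₀ ∧
        ∃ y ∈ Set.Icc (0 : ℝ) h₀, φ y ≠ 0) ↔
      k * s ^ 2 + γ * T * s - g * T = 0 := by
    constructor
    · rintro ⟨φ, hφ, hode0, h0, hbc, y₀, hy₀, hφy₀⟩
      have hode : ∀ y ∈ Set.Ioo (0:ℝ) h₀, deriv (deriv φ) y = k^2 * φ y := by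
        intro y hy
        have hne : γ * y - c ≠ 0 := by
          have := hc y ⟨hy.1.le, hy.2.le⟩; linarith
        rcases mul_eq_zero.mp (hode0 y hy) with h | h
        · exact absurd h hne
        · linarith
      obtain ⟨key, hdh⟩ := aux_sol h₀ k hh₀ φ hφ hode h0
      have hd0 : deriv φ 0 ≠ 0 := by
        intro h
        have h1 := key y₀ hy₀
        rw [h, zero_mul] at h1
        exact hφy₀ (by
          rcases mul_eq_zero.mp h1 with h2 | h2
          · exact absurd h2 hk0
          · exact h2)
      have hφh : k * φ h₀ = deriv φ 0 * Real.sinh (k*h₀) := key h₀ ⟨hh₀.le, le_rfl⟩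
      rw [hdh, hgh] at hbc
      have e1 : k * s^2 * (deriv φ 0 * Real.cosh (k*h₀))
          = k * s^2 * ((g/(-s)^2 + γ/(-s)) * φ h₀) := by rw [hbc]
      have e2 : k * s^2 * ((g/(-s)^2 + γ/(-s)) * φ h₀) = (g - γ*s) * (k * φ h₀) := by
        field_simp [hns0]
        ring
      rw [e2, hφh] at e1
      have e4 : k * s^2 * Real.cosh (k*h₀) = (g - γ*s) * Real.sinh (k*h₀) := by
        have e3 : deriv φ 0 * (k * s^2 * Real.cosh (k*h₀))
            = deriv φ 0 * ((g - γ*s) * Real.sinh (k*h₀)) := by linear_combination e1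
        exact mul_left_cancel₀ hd0 e3
      rw [hTdef]
      field_simp
      linear_combination e4
    · intro hq
      have hsk : ∀ y : ℝ, HasDerivAt (fun y => Real.sinh (k*y)) (k * Real.cosh (k*y)) y := by
        intro y
        have := (Real.hasDerivAt_sinh (k*y)).comp y ((hasDerivAt_id y).const_mul k)
        simpa [mul_comm, Function.comp_def] using this
      have hck : ∀ y : ℝ, HasDerivAt (fun y => Real.cosh (k*y)) (k * Real.sinh (k*y)) y := by
        intro y
        have := (Real.hasDerivAt_cosh (k*y)).comp y ((hasDerivAt_id y).const_mul k)
        simpa [mul_comm, Function.comp_def] using this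
      have hd1 : deriv (fun y => Real.sinh (k*y)) = fun y => k * Real.cosh (k*y) :=
        funext fun y => (hsk y).deriv
      have hd2 : deriv (deriv (fun y => Real.sinh (k*y))) = fun y => k^2 * Real.sinh (k*y) := by
        rw [hd1]
        funext y
        have : HasDerivAt (fun y => k * Real.cosh (k*y)) (k * (k * Real.sinh (k*y))) y :=
          (hck y).const_mul k
        rw [this.deriv]; ring
      refine ⟨fun y => Real.sinh (k*y),
        Real.contDiff_sinh.comp (contDiff_const.mul contDiff_id), ?_, by simp, ?_,
        ⟨h₀, ⟨hh₀.le, le_rfl⟩, ne_of_gt hsinhpos⟩⟩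
      · intro y hy
        simp only [hd2]
        ring
      · simp only [hd1, hgh]
        rw [hTdef] at hq
        field_simp [hns0] at hq ⊢
        linear_combination hq
  constructor
  · rw [hmain]
    exact aux_quad g k γ T s hg hk hTpos hspos
  · exact hmain
end

section
/- Let U ∈ C²([0,h₀]), c ∈ ℝ, φ ∈ C³([0,h₀]), and set u₁(x,y) = φ'(y)cos x, v₁(x,y) = φ(y)sin x. Suppose u₂, v₂, p₂ : ℝ × [0,h₀] → ℝ are C² (with p₂ having continuous mixed second partials) and satisfy the second-order system: (U−c)∂ₓu₂ + U'v₂ + u₁∂ₓu₁ + v₁∂_y u₁ = −∂ₓp₂, (U−c)∂ₓv₂ + u₁∂ₓv₁ + v₁∂_y v₁ = −∂_y p₂, and ∂ₓu₂ + ∂_y v₂ = 0 in ℝ × (0,h₀). Then v₂ satisfies the inhomogeneous Rayleigh PDE (U−c)(∂ₓₓv₂ + ∂_{yy}v₂) − U''v₂ = (1/2)(φφ''' − φ'φ'')(y)·sin(2x) in ℝ × (0,h₀). -/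
/-- Partial derivative in the first (horizontal) variable. -/
noncomputable def pdX (f : ℝ → ℝ → ℝ) : ℝ → ℝ → ℝ := fun x y => deriv (fun t => f t y) x

/-- Partial derivative in the second (vertical) variable. -/
noncomputable def pdY (f : ℝ → ℝ → ℝ) : ℝ → ℝ → ℝ := fun x y => deriv (fun t => f x t) y

open Function

/-- slice in `x` of a differentiable function of two variables -/
lemma hasDerivAt_sliceX {f : ℝ → ℝ → ℝ} {x y : ℝ}
    (hf : DifferentiableAt ℝ (uncurry f) (x, y)) :
    HasDerivAt (fun t => f t y) (pdX f x y) x := by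
  have h1 : HasDerivAt (fun t : ℝ => (t, y)) ((1 : ℝ), (0 : ℝ)) x :=
    (hasDerivAt_id x).prodMk (hasDerivAt_const x y)
  have h2 : HasDerivAt (fun t => f t y) (fderiv ℝ (uncurry f) (x, y) (1, 0)) x := by
    have := hf.hasFDerivAt.comp_hasDerivAt x h1; exact this
  have h3 : pdX f x y = fderiv ℝ (uncurry f) (x, y) (1, 0) := h2.deriv
  rw [show pdX f x y = deriv (fun t => f t y) x from rfl, h2.deriv]
  exact h2

lemma hasDerivAt_sliceY {f : ℝ → ℝ → ℝ} {x y : ℝ}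
    (hf : DifferentiableAt ℝ (uncurry f) (x, y)) :
    HasDerivAt (fun t => f x t) (pdY f x y) y := by
  have h1 : HasDerivAt (fun t : ℝ => (x, t)) ((0 : ℝ), (1 : ℝ)) y :=
    (hasDerivAt_const y x).prodMk (hasDerivAt_id y)
  have h2 : HasDerivAt (fun t => f x t) (fderiv ℝ (uncurry f) (x, y) (0, 1)) y :=
    hf.hasFDerivAt.comp_hasDerivAt y h1
  rw [show pdY f x y = deriv (fun t => f x t) y from rfl, h2.deriv]
  exact h2

lemma pdX_eq {f : ℝ → ℝ → ℝ} {x y : ℝ}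
    (hf : DifferentiableAt ℝ (uncurry f) (x, y)) :
    pdX f x y = fderiv ℝ (uncurry f) (x, y) (1, 0) := by
  have h1 : HasDerivAt (fun t : ℝ => (t, y)) ((1 : ℝ), (0 : ℝ)) x :=
    (hasDerivAt_id x).prodMk (hasDerivAt_const x y)
  exact (by have := hf.hasFDerivAt.comp_hasDerivAt x h1; exact this :
    HasDerivAt (fun t => f t y) (fderiv ℝ (uncurry f) (x, y) (1, 0)) x).deriv

lemma pdY_eq {f : ℝ → ℝ → ℝ} {x y : ℝ}
    (hf : DifferentiableAt ℝ (uncurry f) (x, y)) :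
    pdY f x y = fderiv ℝ (uncurry f) (x, y) (0, 1) := by
  have h1 : HasDerivAt (fun t : ℝ => (x, t)) ((0 : ℝ), (1 : ℝ)) y :=
    (hasDerivAt_const y x).prodMk (hasDerivAt_id y)
  exact (hf.hasFDerivAt.comp_hasDerivAt y h1 :
    HasDerivAt (fun t => f x t) (fderiv ℝ (uncurry f) (x, y) (0, 1)) y).deriv

/-- curve derivative of `p ↦ fderiv F p v` for a C² function -/
lemma hasDerivAt_fderiv_apply {f : ℝ → ℝ → ℝ} (hf : ContDiff ℝ 2 (Function.uncurry f))
    (v : ℝ × ℝ) {γ : ℝ → ℝ × ℝ} {w : ℝ × ℝ} {t : ℝ} (hγ : HasDerivAt γ w t) :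
    HasDerivAt (fun s => fderiv ℝ (Function.uncurry f) (γ s) v)
      (fderiv ℝ (fderiv ℝ (Function.uncurry f)) (γ t) w v) t := by
  have hH : ContDiff ℝ 1 (fderiv ℝ (Function.uncurry f)) := hf.fderiv_right (by norm_num)
  have hH' : HasFDerivAt (fderiv ℝ (Function.uncurry f))
      (fderiv ℝ (fderiv ℝ (Function.uncurry f)) (γ t)) (γ t) :=
    (hH.differentiable one_ne_zero (γ t)).hasFDerivAt
  have happ := (ContinuousLinearMap.apply ℝ ℝ v).hasFDerivAt
    (x := fderiv ℝ (Function.uncurry f) (γ t))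
  have hcomp : HasFDerivAt (fun q => fderiv ℝ (Function.uncurry f) q v)
      ((ContinuousLinearMap.apply ℝ ℝ v).comp
        (fderiv ℝ (fderiv ℝ (Function.uncurry f)) (γ t))) (γ t) := happ.comp (γ t) hH'
  have h := hcomp.comp_hasDerivAt t hγ
  exact h

lemma hasDerivAt_pdXX {f : ℝ → ℝ → ℝ} (hf : ContDiff ℝ 2 (Function.uncurry f)) (x y : ℝ) :
    HasDerivAt (fun s => pdX f s y) (pdX (pdX f) x y) x := by
  have hγ : HasDerivAt (fun t : ℝ => (t, y)) ((1 : ℝ), (0 : ℝ)) x :=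
    (hasDerivAt_id x).prodMk (hasDerivAt_const x y)
  have h := hasDerivAt_fderiv_apply hf (1, 0) hγ
  have heq : (fun s : ℝ => pdX f s y) = fun s => fderiv ℝ (Function.uncurry f) (s, y) (1, 0) :=
    funext fun s => pdX_eq ((hf.differentiable (by norm_num)) (s, y))
  have h2 : HasDerivAt (fun s : ℝ => pdX f s y)
      (fderiv ℝ (fderiv ℝ (Function.uncurry f)) (x, y) (1, 0) (1, 0)) x := by
    rw [heq]; exact h
  rw [show pdX (pdX f) x y = deriv (fun s => pdX f s y) x from rfl, h2.deriv]
  exact h2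

lemma hasDerivAt_pdYX {f : ℝ → ℝ → ℝ} (hf : ContDiff ℝ 2 (Function.uncurry f)) (x y : ℝ) :
    HasDerivAt (fun t => pdX f x t) (pdY (pdX f) x y) y := by
  have hγ : HasDerivAt (fun t : ℝ => (x, t)) ((0 : ℝ), (1 : ℝ)) y :=
    (hasDerivAt_const y x).prodMk (hasDerivAt_id y)
  have h := hasDerivAt_fderiv_apply hf (1, 0) hγ
  have heq : (fun t : ℝ => pdX f x t) = fun t => fderiv ℝ (Function.uncurry f) (x, t) (1, 0) :=
    funext fun t => pdX_eq ((hf.differentiable (by norm_num)) (x, t))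
  have h2 : HasDerivAt (fun t : ℝ => pdX f x t)
      (fderiv ℝ (fderiv ℝ (Function.uncurry f)) (x, y) (0, 1) (1, 0)) y := by
    rw [heq]; exact h
  rw [show pdY (pdX f) x y = deriv (fun t => pdX f x t) y from rfl, h2.deriv]
  exact h2

/-- symmetry of mixed partials for a C² function -/
lemma pd_symm {f : ℝ → ℝ → ℝ} (hf : ContDiff ℝ 2 (Function.uncurry f)) (x y : ℝ) :
    pdY (pdX f) x y = pdX (pdY f) x y := by
  have hγ1 : HasDerivAt (fun t : ℝ => (x, t)) ((0 : ℝ), (1 : ℝ)) y :=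
    (hasDerivAt_const y x).prodMk (hasDerivAt_id y)
  have hγ2 : HasDerivAt (fun t : ℝ => (t, y)) ((1 : ℝ), (0 : ℝ)) x :=
    (hasDerivAt_id x).prodMk (hasDerivAt_const x y)
  have h1 := hasDerivAt_fderiv_apply hf (1, 0) hγ1
  have h2 := hasDerivAt_fderiv_apply hf (0, 1) hγ2
  have heq1 : (fun t : ℝ => pdX f x t) = fun t => fderiv ℝ (Function.uncurry f) (x, t) (1, 0) :=
    funext fun t => pdX_eq ((hf.differentiable (by norm_num)) (x, t))
  have heq2 : (fun s : ℝ => pdY f s y) = fun s => fderiv ℝ (Function.uncurry f) (s, y) (0, 1) :=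
    funext fun s => pdY_eq ((hf.differentiable (by norm_num)) (s, y))
  have e1 : pdY (pdX f) x y
      = fderiv ℝ (fderiv ℝ (Function.uncurry f)) (x, y) (0, 1) (1, 0) := by
    rw [show pdY (pdX f) x y = deriv (fun t => pdX f x t) y from rfl, heq1]
    exact h1.deriv
  have e2 : pdX (pdY f) x y
      = fderiv ℝ (fderiv ℝ (Function.uncurry f)) (x, y) (1, 0) (0, 1) := by
    rw [show pdX (pdY f) x y = deriv (fun s => pdY f s y) x from rfl, heq2]
    exact h2.deriv
  have hsymm := second_derivative_symmetric (f' := fderiv ℝ (Function.uncurry f))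
    (fun p => ((hf.differentiable (by norm_num)) p).hasFDerivAt)
    (((hf.fderiv_right (by norm_num : (1:WithTop ℕ∞) + 1 ≤ 2)).differentiable one_ne_zero
      (x, y)).hasFDerivAt) ((1 : ℝ), (0 : ℝ)) ((0 : ℝ), (1 : ℝ))
  rw [e1, e2, hsymm]

/-- local 1-variable: derivative of `deriv f` from `ContDiffAt` -/
lemma contDiffAt_deriv' {f : ℝ → ℝ} {y : ℝ} {m n : WithTop ℕ∞}
    (hf : ContDiffAt ℝ n f y) (h : m + 1 ≤ n) (h' : m + 1 ≠ ((⊤ : ℕ∞) : WithTop ℕ∞)) :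
    ContDiffAt ℝ m (deriv f) y := by
  obtain ⟨u, hu, hcd⟩ := hf.contDiffOn h (fun hh => absurd hh h')
  obtain ⟨t, htu, hto, hyt⟩ := mem_nhds_iff.mp hu
  exact ((hcd.mono htu).deriv_of_isOpen hto le_rfl).contDiffAt (hto.mem_nhds hyt)


/-- If `(u₂, v₂, p₂)` is a C² solution of the second-order Euler system about
the shear flow `(U(y),0)`, with first-order fields `u₁ = φ'(y)cos x`, `v₁ = φ(y)sin x`,
then `v₂` satisfies the inhomogeneous Rayleigh PDE
`(U-c)Δv₂ - U''v₂ = (1/2)(φφ''' - φ'φ'')·sin 2x` in the strip. -/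
theorem stmt6 (h₀ c : ℝ) (hh₀ : 0 < h₀) (U : ℝ → ℝ)
    (hU : ContDiffOn ℝ 2 U (Set.Icc 0 h₀))
    (φ : ℝ → ℝ) (hφ : ContDiffOn ℝ 3 φ (Set.Icc 0 h₀))
    (u₁ v₁ : ℝ → ℝ → ℝ)
    (hu₁ : u₁ = fun x y => deriv φ y * Real.cos x)
    (hv₁ : v₁ = fun x y => φ y * Real.sin x)
    (u₂ v₂ p₂ : ℝ → ℝ → ℝ)
    (hu₂ : ContDiff ℝ 2 (Function.uncurry u₂))
    (hv₂ : ContDiff ℝ 2 (Function.uncurry v₂))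
    (hp₂ : ContDiff ℝ 2 (Function.uncurry p₂))
    (e₁ : ∀ x : ℝ, ∀ y ∈ Set.Ioo (0 : ℝ) h₀,
      (U y - c) * pdX u₂ x y + deriv U y * v₂ x y
        + u₁ x y * pdX u₁ x y + v₁ x y * pdY u₁ x y = -(pdX p₂ x y))
    (e₂ : ∀ x : ℝ, ∀ y ∈ Set.Ioo (0 : ℝ) h₀,
      (U y - c) * pdX v₂ x y + u₁ x y * pdX v₁ x y + v₁ x y * pdY v₁ x y = -(pdY p₂ x y))
    (e₃ : ∀ x : ℝ, ∀ y ∈ Set.Ioo (0 : ℝ) h₀,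
      pdX u₂ x y + pdY v₂ x y = 0) :
    ∀ x : ℝ, ∀ y ∈ Set.Ioo (0 : ℝ) h₀,
      (U y - c) * (pdX (pdX v₂) x y + pdY (pdY v₂) x y) - deriv (deriv U) y * v₂ x y
        = (1 / 2) * (φ y * deriv (deriv (deriv φ)) y - deriv φ y * deriv (deriv φ) y)
            * Real.sin (2 * x) := by
  intro x y hy
  have hIoo : Set.Ioo (0:ℝ) h₀ ∈ nhds y := isOpen_Ioo.mem_nhds hy
  have hφAt : ∀ t ∈ Set.Ioo (0:ℝ) h₀, ContDiffAt ℝ 3 φ t := fun t ht =>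
    hφ.contDiffAt (Icc_mem_nhds ht.1 ht.2)
  have hUAt : ContDiffAt ℝ 2 U y := hU.contDiffAt (Icc_mem_nhds hy.1 hy.2)
  have hdφ : ∀ t ∈ Set.Ioo (0:ℝ) h₀, DifferentiableAt ℝ (deriv φ) t := fun t ht =>
    (contDiffAt_deriv' (m := 2) (hφAt t ht) (by norm_num) (by norm_num)).differentiableAt (by norm_num)
  have hφy : HasDerivAt φ (deriv φ y) y :=
    ((hφAt y hy).differentiableAt (by norm_num)).hasDerivAt
  have hdφ2 : ContDiffAt ℝ 2 (deriv φ) y :=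
    contDiffAt_deriv' (m := 2) (hφAt y hy) (by norm_num) (by norm_num)
  have hdφy : HasDerivAt (deriv φ) (deriv (deriv φ) y) y :=
    (hdφ2.differentiableAt (by norm_num)).hasDerivAt
  have hddφy : HasDerivAt (deriv (deriv φ)) (deriv (deriv (deriv φ)) y) y :=
    ((contDiffAt_deriv' (m := 1) hdφ2 (by norm_num) (by norm_num)).differentiableAt (by norm_num)).hasDerivAt
  have hUy : HasDerivAt (fun t => U t - c) (deriv U y) y :=
    ((hUAt.differentiableAt (by norm_num)).hasDerivAt).sub_const c
  have hdUy : HasDerivAt (deriv U) (deriv (deriv U) y) y :=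
    ((contDiffAt_deriv' (m := 1) hUAt (by norm_num) (by norm_num)).differentiableAt (by norm_num)).hasDerivAt
  -- Rewritten first equation on the strip
  have E1 : ∀ t ∈ Set.Ioo (0:ℝ) h₀,
      (U t - c) * pdX u₂ x t + deriv U t * v₂ x t
        + (φ t * deriv (deriv φ) t - deriv φ t * deriv φ t) * (Real.sin x * Real.cos x)
        = -(pdX p₂ x t) := by
    intro t ht
    have h := e₁ x t ht
    have h1 : pdX u₁ x t = deriv φ t * -Real.sin x := by
      rw [hu₁]
      show deriv (fun s => deriv φ t * Real.cos s) x = _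
      rw [deriv_const_mul_field, Real.deriv_cos]
    have h2 : pdY u₁ x t = deriv (deriv φ) t * Real.cos x := by
      rw [hu₁]
      show deriv (fun s => deriv φ s * Real.cos x) t = _
      rw [deriv_mul_const (hdφ t ht)]
    rw [h1, h2] at h
    simp only [hu₁, hv₁] at h
    linear_combination h
  have hEv : (fun t => (U t - c) * pdX u₂ x t + deriv U t * v₂ x t
        + (φ t * deriv (deriv φ) t - deriv φ t * deriv φ t) * (Real.sin x * Real.cos x))
      =ᶠ[nhds y] fun t => -(pdX p₂ x t) := Filter.eventuallyEq_of_mem hIoo E1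
  have hBv : HasDerivAt (fun t => pdX u₂ x t) (pdY (pdX u₂) x y) y := hasDerivAt_pdYX hu₂ x y
  have hDv : HasDerivAt (fun t => v₂ x t) (pdY v₂ x y) y :=
    hasDerivAt_sliceY ((hv₂.differentiable (by norm_num)) (x, y))
  have hLHS : HasDerivAt (fun t => (U t - c) * pdX u₂ x t + deriv U t * v₂ x t
        + (φ t * deriv (deriv φ) t - deriv φ t * deriv φ t) * (Real.sin x * Real.cos x))
      ((deriv U y * pdX u₂ x y + (U y - c) * pdY (pdX u₂) x y)
        + (deriv (deriv U) y * v₂ x y + deriv U y * pdY v₂ x y)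
        + ((deriv φ y * deriv (deriv φ) y + φ y * deriv (deriv (deriv φ)) y
            - (deriv (deriv φ) y * deriv φ y + deriv φ y * deriv (deriv φ) y))
          * (Real.sin x * Real.cos x))) y :=
    ((hUy.mul hBv).add (hdUy.mul hDv)).add
      (((hφy.mul hddφy).sub (hdφy.mul hdφy)).mul_const _)
  have stepA : (deriv U y * pdX u₂ x y + (U y - c) * pdY (pdX u₂) x y)
        + (deriv (deriv U) y * v₂ x y + deriv U y * pdY v₂ x y)
        + ((deriv φ y * deriv (deriv φ) y + φ y * deriv (deriv (deriv φ)) y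
            - (deriv (deriv φ) y * deriv φ y + deriv φ y * deriv (deriv φ) y))
          * (Real.sin x * Real.cos x))
      = -(pdY (pdX p₂) x y) := by
    have h := hEv.deriv_eq
    rw [hLHS.deriv] at h
    rw [deriv.fun_neg] at h
    exact h
  -- Rewritten second equation (for all x, at height y)
  have E2 : ∀ s : ℝ, (U y - c) * pdX v₂ s y + φ y * deriv φ y = -(pdY p₂ s y) := by
    intro s
    have h := e₂ s y hy
    have h3 : pdX v₁ s y = φ y * Real.cos s := by
      rw [hv₁]
      show deriv (fun t => φ y * Real.sin t) s = _
      rw [deriv_const_mul_field, Real.deriv_sin]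
    have h4 : pdY v₁ s y = deriv φ y * Real.sin s := by
      rw [hv₁]
      show deriv (fun t => φ t * Real.sin s) y = _
      rw [deriv_mul_const ((hφAt y hy).differentiableAt (by norm_num))]
    rw [h3, h4] at h
    simp only [hu₁, hv₁] at h
    linear_combination h - φ y * deriv φ y * Real.sin_sq_add_cos_sq s
  have hfun : (fun s => (U y - c) * pdX v₂ s y + φ y * deriv φ y)
      = fun s => -(pdY p₂ s y) := funext E2
  have hXX : HasDerivAt (fun s => pdX v₂ s y) (pdX (pdX v₂) x y) x := hasDerivAt_pdXX hv₂ x y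
  have hLHS2 : HasDerivAt (fun s => (U y - c) * pdX v₂ s y + φ y * deriv φ y)
      ((U y - c) * pdX (pdX v₂) x y) x := (hXX.const_mul (U y - c)).add_const _
  have stepB : (U y - c) * pdX (pdX v₂) x y = -(pdX (pdY p₂) x y) := by
    have h := hLHS2.deriv
    rw [hfun] at h
    rw [deriv.fun_neg] at h
    exact h.symm
  have symmp : pdY (pdX p₂) x y = pdX (pdY p₂) x y := pd_symm hp₂ x y
  have hEv3 : (fun t => pdX u₂ x t) =ᶠ[nhds y] fun t => -(pdY v₂ x t) :=
    Filter.eventuallyEq_of_mem hIoo (fun t ht => by linarith [e₃ x t ht])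
  have stepD : pdY (pdX u₂) x y = -(pdY (pdY v₂) x y) := by
    have h := hEv3.deriv_eq
    rw [deriv.fun_neg] at h
    exact h
  have stepE : pdX u₂ x y = -(pdY v₂ x y) := by linarith [e₃ x y hy]
  rw [Real.sin_two_mul]
  linear_combination stepB - stepA + symmp + (U y - c) * stepD + deriv U y * stepE
end

section
/- Let U ∈ C¹([0,h₀]), c ∈ ℝ, φ ∈ C¹([0,h₀]) with φ(0) = 0, and set u₁(x,y) = φ'(y)cos x, v₁(x,y) = φ(y)sin x. Suppose v₂, p₂ : ℝ × [0,h₀] → ℝ are C¹, 2π-periodic in x, and satisfy the second-order vertical momentum equation (U−c)∂ₓv₂ + u₁∂ₓv₁ + v₁∂_y v₁ = −∂_y p₂ in ℝ × (0,h₀). Then for all y ∈ [0,h₀], (1/2π)∫₀^{2π} p₂(x,y) dx = −(1/2)φ(y)² + (1/2π)∫₀^{2π} p₂(x,0) dx. -/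
lemma hasDerivAt_uncurry_snd (f : ℝ → ℝ → ℝ) (hf : ContDiff ℝ 1 (Function.uncurry f))
    (x t : ℝ) :
    HasDerivAt (fun s => f x s) (fderiv ℝ (Function.uncurry f) (x, t) (0, 1)) t := by
  have h1 : HasDerivAt (fun s : ℝ => ((x, s) : ℝ × ℝ)) ((0 : ℝ), (1 : ℝ)) t :=
    (hasDerivAt_const t x).prodMk (hasDerivAt_id t)
  exact ((hf.differentiable one_ne_zero (x, t)).hasFDerivAt).comp_hasDerivAt t h1

lemma hasDerivAt_uncurry_fst (f : ℝ → ℝ → ℝ) (hf : ContDiff ℝ 1 (Function.uncurry f))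
    (x t : ℝ) :
    HasDerivAt (fun s => f s t) (fderiv ℝ (Function.uncurry f) (x, t) (1, 0)) x := by
  have h1 : HasDerivAt (fun s : ℝ => ((s, t) : ℝ × ℝ)) ((1 : ℝ), (0 : ℝ)) x :=
    (hasDerivAt_id x).prodMk (hasDerivAt_const x t)
  exact ((hf.differentiable one_ne_zero (x, t)).hasFDerivAt).comp_hasDerivAt x h1

lemma swap_interval_integral (f : ℝ → ℝ → ℝ) (hf : Continuous (Function.uncurry f))
    {a b c d : ℝ} (hab : a ≤ b) (hcd : c ≤ d) :
    ∫ x in a..b, ∫ t in c..d, f x t = ∫ t in c..d, ∫ x in a..b, f x t := by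
  rw [intervalIntegral.integral_of_le hab, intervalIntegral.integral_of_le hcd]
  simp_rw [intervalIntegral.integral_of_le hcd, intervalIntegral.integral_of_le hab]
  apply MeasureTheory.integral_integral_swap
  rw [MeasureTheory.Measure.prod_restrict]
  exact ((hf.continuousOn.integrableOn_compact
    (isCompact_Icc.prod isCompact_Icc)).mono_set
    (Set.prod_mono Set.Ioc_subset_Icc_self Set.Ioc_subset_Icc_self))

/-- With first-order fields `u₁ = φ'(y)cos x`, `v₁ = φ(y)sin x`, `φ(0) = 0`,
if `v₂, p₂` are C¹, `2π`-periodic in `x`, and satisfy the second-order vertical momentum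
equation, then the `x`-average of `p₂` at depth `y` equals `-(1/2)φ(y)²` plus the
`x`-average of `p₂` at the bed. -/
theorem stmt7 (h₀ c : ℝ) (hh₀ : 0 < h₀) (U : ℝ → ℝ)
    (hU : ContDiffOn ℝ 1 U (Set.Icc 0 h₀))
    (φ : ℝ → ℝ) (hφ : ContDiffOn ℝ 1 φ (Set.Icc 0 h₀)) (hφ0 : φ 0 = 0)
    (u₁ v₁ : ℝ → ℝ → ℝ)
    (hu₁ : u₁ = fun x y => deriv φ y * Real.cos x)
    (hv₁ : v₁ = fun x y => φ y * Real.sin x)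
    (v₂ p₂ : ℝ → ℝ → ℝ)
    (hv₂ : ContDiff ℝ 1 (Function.uncurry v₂))
    (hp₂ : ContDiff ℝ 1 (Function.uncurry p₂))
    (hv₂per : ∀ x y : ℝ, v₂ (x + 2 * Real.pi) y = v₂ x y)
    (hp₂per : ∀ x y : ℝ, p₂ (x + 2 * Real.pi) y = p₂ x y)
    (e₂ : ∀ x : ℝ, ∀ y ∈ Set.Ioo (0 : ℝ) h₀,
      (U y - c) * pdX v₂ x y + u₁ x y * pdX v₁ x y + v₁ x y * pdY v₁ x y
        = -(pdY p₂ x y)) :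
    ∀ y ∈ Set.Icc (0 : ℝ) h₀,
      (1 / (2 * Real.pi)) * ∫ x in (0 : ℝ)..(2 * Real.pi), p₂ x y
        = -(1 / 2) * (φ y) ^ 2
          + (1 / (2 * Real.pi)) * ∫ x in (0 : ℝ)..(2 * Real.pi), p₂ x 0 := by
  intro y hy
  obtain ⟨hy0, hyh⟩ := hy
  have hπ : (0 : ℝ) < 2 * Real.pi := by positivity
  -- vertical derivative of p₂
  set G : ℝ × ℝ → ℝ := fun q => fderiv ℝ (Function.uncurry p₂) q (0, 1) with hG
  have hGcont : Continuous G :=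
    (hp₂.continuous_fderiv one_ne_zero).clm_apply continuous_const
  have hGderiv : ∀ x t : ℝ, HasDerivAt (fun s => p₂ x s) (G (x, t)) t :=
    fun x t => hasDerivAt_uncurry_snd p₂ hp₂ x t
  -- horizontal derivative of v₂
  set X : ℝ × ℝ → ℝ := fun q => fderiv ℝ (Function.uncurry v₂) q (1, 0) with hX
  have hXcont : Continuous X :=
    (hv₂.continuous_fderiv one_ne_zero).clm_apply continuous_const
  have hXderiv : ∀ x t : ℝ, HasDerivAt (fun s => v₂ s t) (X (x, t)) x :=
    fun x t => hasDerivAt_uncurry_fst v₂ hv₂ x t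
  -- ψ is the (within) derivative of φ
  set ψ : ℝ → ℝ := derivWithin φ (Set.Icc 0 h₀) with hψ
  have hψcont : ContinuousOn ψ (Set.Icc 0 h₀) :=
    hφ.continuousOn_derivWithin (uniqueDiffOn_Icc hh₀) le_rfl
  have hφderiv : ∀ t ∈ Set.Ioo (0 : ℝ) h₀, HasDerivAt φ (ψ t) t := by
    intro t ht
    have hnhds : Set.Icc (0 : ℝ) h₀ ∈ nhds t := Icc_mem_nhds ht.1 ht.2
    have hdiff : DifferentiableAt ℝ φ t :=
      ((hφ.contDiffAt hnhds).differentiableAt one_ne_zero)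
    have : ψ t = deriv φ t := derivWithin_of_mem_nhds hnhds
    rw [this]
    exact hdiff.hasDerivAt
  -- the momentum equation rewritten
  have key : ∀ x : ℝ, ∀ t ∈ Set.Ioo (0 : ℝ) h₀,
      G (x, t) = -((U t - c) * X (x, t) + φ t * ψ t) := by
    intro x t ht
    have he := e₂ x t ht
    have h1 : pdX v₂ x t = X (x, t) := (hXderiv x t).deriv
    have h2 : pdY p₂ x t = G (x, t) := (hGderiv x t).deriv
    have h3 : pdX v₁ x t = φ t * Real.cos x := by
      rw [hv₁]
      exact (((Real.hasDerivAt_sin x).const_mul (φ t))).deriv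
    have h4 : pdY v₁ x t = ψ t * Real.sin x := by
      rw [hv₁]
      exact (((hφderiv t ht).mul_const (Real.sin x))).deriv
    have h5 : u₁ x t = ψ t * Real.cos x := by
      rw [hu₁]
      have : ψ t = deriv φ t := derivWithin_of_mem_nhds (Icc_mem_nhds ht.1 ht.2)
      rw [this]
    have h6 : v₁ x t = φ t * Real.sin x := by rw [hv₁]
    rw [h1, h2, h3, h4, h5, h6] at he
    have htrig : Real.cos x ^ 2 + Real.sin x ^ 2 = 1 := Real.cos_sq_add_sin_sq x
    have hsum : ψ t * Real.cos x * (φ t * Real.cos x) + φ t * Real.sin x * (ψ t * Real.sin x)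
        = φ t * ψ t := by
      have hr : ψ t * Real.cos x * (φ t * Real.cos x) + φ t * Real.sin x * (ψ t * Real.sin x)
          = φ t * ψ t * (Real.cos x ^ 2 + Real.sin x ^ 2) := by ring
      rw [hr, htrig, mul_one]
    linarith [he, hsum]
  -- inner x-integral of G at level t
  have inner : ∀ t ∈ Set.Ioo (0 : ℝ) h₀,
      (∫ x in (0 : ℝ)..(2 * Real.pi), G (x, t))
        = -(2 * Real.pi * (φ t * ψ t)) := by
    intro t ht
    have hXint : ∫ x in (0 : ℝ)..(2 * Real.pi), X (x, t) = 0 := by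
      have := intervalIntegral.integral_eq_sub_of_hasDerivAt
        (f := fun s => v₂ s t) (f' := fun x => X (x, t))
        (fun x _ => hXderiv x t)
        ((hXcont.comp (continuous_id.prodMk continuous_const)).intervalIntegrable 0 (2 * Real.pi))
      rw [this]
      have h0 := hv₂per 0 t
      rw [zero_add] at h0
      show v₂ (2 * Real.pi) t - v₂ 0 t = 0
      rw [h0, sub_self]
    have hcongr : ∀ x : ℝ, G (x, t) = -((U t - c) * X (x, t) + φ t * ψ t) :=
      fun x => key x t ht
    calc (∫ x in (0 : ℝ)..(2 * Real.pi), G (x, t))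
        = ∫ x in (0 : ℝ)..(2 * Real.pi), -((U t - c) * X (x, t) + φ t * ψ t) := by
          apply intervalIntegral.integral_congr
          intro x _
          exact hcongr x
      _ = -((U t - c) * (∫ x in (0 : ℝ)..(2 * Real.pi), X (x, t))
            + (2 * Real.pi - 0) * (φ t * ψ t)) := by
          rw [intervalIntegral.integral_neg]
          congr 1
          have hXi : IntervalIntegrable (fun x => (U t - c) * X (x, t))
              MeasureTheory.volume 0 (2 * Real.pi) := by
            apply Continuous.intervalIntegrable
            exact continuous_const.mul (hXcont.comp (continuous_id.prodMk continuous_const))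
          rw [intervalIntegral.integral_add hXi intervalIntegrable_const,
            intervalIntegral.integral_const_mul, intervalIntegral.integral_const]
          simp [smul_eq_mul]
      _ = -(2 * Real.pi * (φ t * ψ t)) := by rw [hXint]; ring
  -- FTC in the vertical direction, then swap
  have step1 : ∀ x : ℝ, ∫ t in (0 : ℝ)..y, G (x, t) = p₂ x y - p₂ x 0 := by
    intro x
    exact intervalIntegral.integral_eq_sub_of_hasDerivAt
      (fun t _ => hGderiv x t)
      ((hGcont.comp (continuous_const.prodMk continuous_id)).intervalIntegrable 0 y)
  have hswap : ∫ x in (0 : ℝ)..(2 * Real.pi), ∫ t in (0 : ℝ)..y, G (x, t)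
      = ∫ t in (0 : ℝ)..y, ∫ x in (0 : ℝ)..(2 * Real.pi), G (x, t) := by
    exact swap_interval_integral (fun x t => G (x, t))
      (by exact hGcont) hπ.le hy0
  -- compute the t-integral
  have hφψint : ∫ t in (0 : ℝ)..y, φ t * ψ t = φ y ^ 2 / 2 := by
    have hIccsub : Set.Icc (0 : ℝ) y ⊆ Set.Icc 0 h₀ := Set.Icc_subset_Icc le_rfl hyh
    have hcont2 : ContinuousOn (fun t => φ t ^ 2) (Set.Icc 0 y) :=
      ((hφ.continuousOn.mono hIccsub).pow 2)
    have hderiv2 : ∀ t ∈ Set.Ioo (0 : ℝ) y,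
        HasDerivWithinAt (fun t => φ t ^ 2) (2 * (φ t * ψ t)) (Set.Ioi t) t := by
      intro t ht
      have ht' : t ∈ Set.Ioo (0 : ℝ) h₀ := ⟨ht.1, lt_of_lt_of_le ht.2 hyh⟩
      have := ((hφderiv t ht').pow 2)
      simp only [Nat.cast_ofNat, pow_one] at this
      have h2 : (2 : ℝ) * φ t ^ (2 - 1) * ψ t = 2 * (φ t * ψ t) := by ring
      rw [h2] at this
      exact this.hasDerivWithinAt
    have hint : IntervalIntegrable (fun t => 2 * (φ t * ψ t)) MeasureTheory.volume 0 y := by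
      apply ContinuousOn.intervalIntegrable
      rw [Set.uIcc_of_le hy0]
      exact continuousOn_const.mul ((hφ.continuousOn.mono hIccsub).mul (hψcont.mono hIccsub))
    have := intervalIntegral.integral_eq_sub_of_hasDeriv_right_of_le hy0 hcont2 hderiv2 hint
    have h2 : ∫ t in (0 : ℝ)..y, 2 * (φ t * ψ t)
        = 2 * ∫ t in (0 : ℝ)..y, φ t * ψ t := intervalIntegral.integral_const_mul _ _
    rw [h2, hφ0] at this
    linarith [this]
  -- a.e. congruence on (0, y]
  have hcongr_ae : ∫ t in (0 : ℝ)..y, ∫ x in (0 : ℝ)..(2 * Real.pi), G (x, t)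
      = ∫ t in (0 : ℝ)..y, -(2 * Real.pi * (φ t * ψ t)) := by
    apply intervalIntegral.integral_congr_ae
    have hne : ∀ᵐ t : ℝ ∂MeasureTheory.volume, t ≠ h₀ := by
      rw [MeasureTheory.ae_iff]
      simp only [Ne, not_not]
      have : {a : ℝ | a = h₀} = {h₀} := rfl
      rw [this]
      exact MeasureTheory.measure_singleton h₀
    filter_upwards [hne] with t htne htmem
    rw [Set.uIoc_of_le hy0] at htmem
    have ht : t ∈ Set.Ioo (0 : ℝ) h₀ := by
      refine ⟨htmem.1, lt_of_le_of_ne (le_trans htmem.2 hyh) htne⟩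
    exact inner t ht
  have hval : ∫ t in (0 : ℝ)..y, -(2 * Real.pi * (φ t * ψ t))
      = -(Real.pi * φ y ^ 2) := by
    rw [intervalIntegral.integral_neg, intervalIntegral.integral_const_mul, hφψint]
    ring
  -- put it together
  have hsub : (∫ x in (0 : ℝ)..(2 * Real.pi), p₂ x y)
      - (∫ x in (0 : ℝ)..(2 * Real.pi), p₂ x 0) = -(Real.pi * φ y ^ 2) := by
    have hcy : ∀ z : ℝ, IntervalIntegrable (fun x => p₂ x z) MeasureTheory.volume 0 (2 * Real.pi) := by
      intro z
      exact ((hp₂.continuous).comp (continuous_id.prodMk continuous_const)).intervalIntegrable _ _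
    rw [← intervalIntegral.integral_sub (hcy y) (hcy 0)]
    calc (∫ x in (0 : ℝ)..(2 * Real.pi), (p₂ x y - p₂ x 0))
        = ∫ x in (0 : ℝ)..(2 * Real.pi), ∫ t in (0 : ℝ)..y, G (x, t) := by
          apply intervalIntegral.integral_congr
          intro x _
          exact (step1 x).symm
      _ = ∫ t in (0 : ℝ)..y, ∫ x in (0 : ℝ)..(2 * Real.pi), G (x, t) := hswap
      _ = ∫ t in (0 : ℝ)..y, -(2 * Real.pi * (φ t * ψ t)) := hcongr_ae
      _ = -(Real.pi * φ y ^ 2) := hval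
  have hπne : Real.pi ≠ 0 := Real.pi_ne_zero
  field_simp
  nlinarith [hsub, Real.pi_pos]
end

section
/- Let g, h₀ > 0, c ≠ 0, b ∈ ℝ, φ(y) = (b/c)·sinh(y), and ψ(y) = −(b²/(8c³))·sinh(2y). Then the second-order reconstruction formula for zero vorticity evaluates to: −(1/2)φ(h₀)² + (1/4)(φφ'' − (φ')²)(h₀)·cos(2x) + (−c)ψ'(h₀)·cos(2x) = (1/2)(b/c)²·sinh²(h₀)·(−1 + cos(2x)) for all x ∈ ℝ. -/
/-- With `φ(y) = (b/c)sinh y` and `ψ(y) = -(b²/(8c³))sinh 2y`, the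
second-order reconstruction formula for zero vorticity evaluates to
`(1/2)(b/c)²·sinh²(h₀)·(-1 + cos 2x)`. -/
theorem stmt9 (g h₀ b c : ℝ) (hg : 0 < g) (hh₀ : 0 < h₀) (hc : c ≠ 0)
    (φ ψ : ℝ → ℝ)
    (hφdef : φ = fun y => (b / c) * Real.sinh y)
    (hψdef : ψ = fun y => -(b ^ 2 / (8 * c ^ 3)) * Real.sinh (2 * y)) :
    ∀ x : ℝ,
      -(1 / 2) * (φ h₀) ^ 2
        + (1 / 4) * (φ h₀ * deriv (deriv φ) h₀ - (deriv φ h₀) ^ 2) * Real.cos (2 * x)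
        + (-c) * deriv ψ h₀ * Real.cos (2 * x)
      = (1 / 2) * (b / c) ^ 2 * (Real.sinh h₀) ^ 2 * (-1 + Real.cos (2 * x)) := by
  have hφ' : deriv φ = fun y => (b / c) * Real.cosh y := by
    funext y
    rw [hφdef]
    simp [deriv_const_mul]
  have hφ'' : deriv (deriv φ) h₀ = (b / c) * Real.sinh h₀ := by
    rw [hφ']
    simp [deriv_const_mul]
  have hψ' : deriv ψ h₀ = -(b ^ 2 / (8 * c ^ 3)) * (2 * Real.cosh (2 * h₀)) := by
    rw [hψdef]
    have : HasDerivAt (fun y => -(b ^ 2 / (8 * c ^ 3)) * Real.sinh (2 * y))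
        (-(b ^ 2 / (8 * c ^ 3)) * (Real.cosh (2 * h₀) * 2)) h₀ := by
      have := (((Real.hasDerivAt_sinh (2 * h₀)).comp h₀
        ((hasDerivAt_id h₀).const_mul 2)).const_mul (-(b ^ 2 / (8 * c ^ 3))))
      simpa [mul_comm] using this
    rw [this.deriv]; ring
  intro x
  rw [hφ'', hψ', hφ', hφdef]
  simp only [Real.cosh_sq']
  have h2 : Real.cosh (2 * h₀) = 2 * Real.sinh h₀ ^ 2 + 1 := by
    rw [Real.cosh_two_mul, Real.cosh_sq']; ring
  rw [h2]
  have h3 : Real.cosh h₀ ^ 2 = 1 + Real.sinh h₀ ^ 2 := Real.cosh_sq' h₀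
  field_simp
  linear_combination (-16 * b ^ 2 * Real.cos (2 * x)) * h3
end

section
/- Let g, h₀ > 0, γ ∈ ℝ, c with c − γy ≠ 0 for all y ∈ [0,h₀] and c ≠ 0, and b ∈ ℝ. For the shear flow U(y) = γy: (i) the unique C² solution of (γy−c)(φ''−φ) = 0 on (0,h₀), φ(0)=0, φ'(0) = b/c, is φ(y) = (b/c)·sinh(y); and (ii) the first-order reconstruction formula gives g·η₁(x) = ((c−γh₀)/c·cosh(h₀) + (γ/c)·sinh(h₀))·b·cos(x). -/
open Real Set

private lemma deriv_ksinh (k : ℝ) :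
    deriv (fun y => k * Real.sinh y) = fun y => k * Real.cosh y := by
  funext y; simp [Real.deriv_sinh]

private lemma deriv_kcosh (k : ℝ) :
    deriv (fun y => k * Real.cosh y) = fun y => k * Real.sinh y := by
  funext y; simp [Real.deriv_cosh]

/-- For the linear shear flow `U(y) = γy` with `c - γy ≠ 0` on `[0,h₀]` and
`c ≠ 0`: (i) the unique C² solution of `(γy - c)(φ'' - φ) = 0` on `(0,h₀)`, `φ(0) = 0`,
`φ'(0) = b/c`, is `φ(y) = (b/c)sinh y`; (ii) the first-order reconstruction formula gives
`g·η₁(x) = ((c-γh₀)/c·cosh h₀ + (γ/c)·sinh h₀)·b·cos x`. -/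
theorem stmt10 (g h₀ γ c b : ℝ) (hg : 0 < g) (hh₀ : 0 < h₀)
    (hcγ : ∀ y ∈ Set.Icc (0 : ℝ) h₀, c - γ * y ≠ 0) (hc : c ≠ 0) :
    ((fun y : ℝ => (b / c) * Real.sinh y) 0 = 0 ∧
      deriv (fun y : ℝ => (b / c) * Real.sinh y) 0 = b / c ∧
      (∀ y ∈ Set.Ioo (0 : ℝ) h₀,
        (γ * y - c) * (deriv (deriv (fun y : ℝ => (b / c) * Real.sinh y)) y
          - (b / c) * Real.sinh y) = 0)) ∧
    (∀ φ : ℝ → ℝ, ContDiff ℝ 2 φ →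
      (∀ y ∈ Set.Ioo (0 : ℝ) h₀, (γ * y - c) * (deriv (deriv φ) y - φ y) = 0) →
      φ 0 = 0 → deriv φ 0 = b / c →
      ∀ y ∈ Set.Icc (0 : ℝ) h₀, φ y = (b / c) * Real.sinh y) ∧
    (∀ x : ℝ,
      ((c - γ * h₀) * deriv (fun y : ℝ => (b / c) * Real.sinh y) h₀
          + γ * ((b / c) * Real.sinh h₀)) * Real.cos x
        = ((c - γ * h₀) / c * Real.cosh h₀ + (γ / c) * Real.sinh h₀) * b * Real.cos x) := by
  refine ⟨⟨by simp, ?_, ?_⟩, ?_, ?_⟩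
  · rw [deriv_ksinh]; simp
  · intro y hy
    rw [deriv_ksinh, deriv_kcosh]
    ring
  · -- uniqueness
    intro φ hφ heq h0 h0'
    have hφ1 : ContDiff ℝ 1 (deriv φ) :=
      (contDiff_succ_iff_deriv.mp (by exact_mod_cast hφ : ContDiff ℝ (1+1) φ)).2.2
    have hφd : Differentiable ℝ φ := hφ.differentiable (by norm_num)
    have hφ'd : Differentiable ℝ (deriv φ) := hφ1.differentiable (by norm_num)
    have hφ'c : Continuous (deriv φ) := hφ'd.continuous
    have hφ''c : Continuous (deriv (deriv φ)) := hφ1.continuous_deriv le_rfl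
    -- φ'' = φ on Icc
    have hIcc : ∀ y ∈ Set.Icc (0:ℝ) h₀, deriv (deriv φ) y = φ y := by
      have hIoo : Set.EqOn (deriv (deriv φ)) φ (Set.Ioo 0 h₀) := by
        intro y hy
        have hne : γ * y - c ≠ 0 := by
          have := hcγ y ⟨le_of_lt hy.1, le_of_lt hy.2⟩
          intro h; apply this; linarith [h]
        have := heq y hy
        have := mul_eq_zero.mp this
        rcases this with h | h
        · exact absurd h hne
        · linarith
      have := hIoo.closure hφ''c hφd.continuous
      rw [closure_Ioo (ne_of_lt hh₀)] at this
      exact this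
    -- first integration: F y = exp(-y) * (φ' y + φ y) is constant b/c on Icc
    set F : ℝ → ℝ := fun y => Real.exp (-y) * (deriv φ y + φ y) with hF
    have hFderiv : ∀ x ∈ Set.Ico (0:ℝ) h₀, HasDerivWithinAt F 0 (Set.Ici x) x := by
      intro x hx
      have hx' : x ∈ Set.Icc (0:ℝ) h₀ := ⟨hx.1, le_of_lt hx.2⟩
      have h1 : HasDerivAt (fun y => Real.exp (-y)) (-Real.exp (-x)) x := by
        have := (Real.hasDerivAt_exp (-x)).comp x ((hasDerivAt_id x).neg); simp at this; exact this
      have h2 : HasDerivAt (fun y => deriv φ y + φ y)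
          (deriv (deriv φ) x + deriv φ x) x :=
        ((hφ'd x).hasDerivAt).add ((hφd x).hasDerivAt)
      have h3 := h1.mul h2
      have : (-Real.exp (-x)) * (deriv φ x + φ x)
          + Real.exp (-x) * (deriv (deriv φ) x + deriv φ x) = 0 := by
        rw [hIcc x hx']; ring
      rw [this] at h3
      exact h3.hasDerivWithinAt
    have hFcont : ContinuousOn F (Set.Icc 0 h₀) :=
      ((Real.continuous_exp.comp continuous_neg).mul
        (hφ'c.add hφd.continuous)).continuousOn
    have hFconst : ∀ x ∈ Set.Icc (0:ℝ) h₀, F x = F 0 :=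
      constant_of_has_deriv_right_zero hFcont hFderiv
    have hF0 : F 0 = b / c := by simp [hF, h0, h0']
    have hsum : ∀ y ∈ Set.Icc (0:ℝ) h₀, deriv φ y + φ y = (b / c) * Real.exp y := by
      intro y hy
      have h1 : Real.exp (-y) * (deriv φ y + φ y) = b / c := by
        simpa [hF] using (hFconst y hy).trans hF0
      rw [Real.exp_neg] at h1
      have hexp : Real.exp y ≠ 0 := Real.exp_ne_zero _
      field_simp at h1 ⊢
      linarith [h1]
    -- second integration: G y = exp y * φ y - (b/(2c)) * exp (2y) constant on Icc
    set G : ℝ → ℝ := fun y => Real.exp y * φ y - (b / (2 * c)) * Real.exp (2 * y) with hG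
    have hGderiv : ∀ x ∈ Set.Ico (0:ℝ) h₀, HasDerivWithinAt G 0 (Set.Ici x) x := by
      intro x hx
      have hx' : x ∈ Set.Icc (0:ℝ) h₀ := ⟨hx.1, le_of_lt hx.2⟩
      have h1 : HasDerivAt (fun y => Real.exp y * φ y)
          (Real.exp x * φ x + Real.exp x * deriv φ x) x := by
        have := (Real.hasDerivAt_exp x).mul ((hφd x).hasDerivAt); exact this
      have h2 : HasDerivAt (fun y => (b / (2 * c)) * Real.exp (2 * y))
          ((b / (2 * c)) * (Real.exp (2 * x) * 2)) x := by
        have : HasDerivAt (fun y : ℝ => Real.exp (2 * y)) (Real.exp (2 * x) * 2) x := by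
          have := (Real.hasDerivAt_exp (2 * x)).comp x
            ((hasDerivAt_id x).const_mul 2); simp at this; exact this
        simpa using this.const_mul (b / (2 * c))
      have h3 := h1.sub h2
      have hz : Real.exp x * φ x + Real.exp x * deriv φ x
          - (b / (2 * c)) * (Real.exp (2 * x) * 2) = 0 := by
        have hs := hsum x hx'
        have h2x : Real.exp (2 * x) = Real.exp x * Real.exp x := by
          rw [two_mul, Real.exp_add]
        rw [h2x]
        have : Real.exp x * φ x + Real.exp x * deriv φ x
            = Real.exp x * (deriv φ x + φ x) := by ring
        rw [this, hs]
        field_simp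
        ring
      rw [hz] at h3
      exact h3.hasDerivWithinAt
    have hGcont : ContinuousOn G (Set.Icc 0 h₀) :=
      ((Real.continuous_exp.mul hφd.continuous).sub
        (continuous_const.mul (Real.continuous_exp.comp (continuous_const.mul continuous_id)))).continuousOn
    have hGconst : ∀ x ∈ Set.Icc (0:ℝ) h₀, G x = G 0 :=
      constant_of_has_deriv_right_zero hGcont hGderiv
    have hG0 : G 0 = -(b / (2 * c)) := by simp [hG, h0]
    intro y hy
    have := (hGconst y hy).trans hG0
    simp only [hG] at this
    have hsinh : Real.sinh y = (Real.exp y - Real.exp (-y)) / 2 := Real.sinh_eq y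
    have hexp : Real.exp y ≠ 0 := Real.exp_ne_zero _
    have h2y : Real.exp (2 * y) = Real.exp y * Real.exp y := by
      rw [two_mul, Real.exp_add]
    have hey : Real.exp (-y) = (Real.exp y)⁻¹ := by
      rw [Real.exp_neg]
    rw [h2y] at this
    rw [hsinh, hey]
    field_simp at this ⊢
    nlinarith [this]
  · intro x
    rw [deriv_ksinh]
    have key : (c - γ * h₀) * (b / c * Real.cosh h₀) + γ * (b / c * Real.sinh h₀)
        = ((c - γ * h₀) / c * Real.cosh h₀ + γ / c * Real.sinh h₀) * b := by
      field_simp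
    rw [key, mul_assoc]
end

section
/- Let g > 0, h₀ > 0, U ∈ C¹([0,h₀]) with c > max_{[0,h₀]} U, let b₁ ∈ C¹(ℝ), and define fr(y) = ∫₀^y dz/(U(z)−c)². Set u₁(x,y) = −b₁(x)·(U'(y)fr(y) + 1/(U(y)−c)), v₁(x,y) = b₁'(x)·(U(y)−c)·fr(y), p₁(x,y) = b₁(x). Then: (i) (U−c)∂ₓu₁ + U'v₁ = −∂ₓp₁, (ii) ∂_y p₁ = 0, (iii) ∂ₓu₁ + ∂_y v₁ = 0 in ℝ × (0,h₀); (iv) v₁(x,0) = 0; and (v) if in addition c satisfies the Burns condition ∫₀^{h₀} dy/(U(y)−c)² = 1/g and η₁ = b₁/g, then the kinematic surface condition v₁(x,h₀) = (U(h₀)−c)·η₁'(x) holds for all x. -/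
/-- With `fr(y) = ∫₀^y (U(z)-c)⁻² dz`, the fields
`u₁ = -b₁(x)(U'(y)fr(y) + 1/(U(y)-c))`, `v₁ = b₁'(x)(U(y)-c)fr(y)`, `p₁ = b₁(x)` satisfy
the first-order long-wave Euler system and bottom condition; and under the Burns
condition, with `η₁ = b₁/g`, the kinematic surface condition holds. -/
theorem stmt13 (g h₀ c : ℝ) (hg : 0 < g) (hh₀ : 0 < h₀)
    (U : ℝ → ℝ) (hU : ContDiffOn ℝ 1 U (Set.Icc 0 h₀))
    (hc : ∀ y ∈ Set.Icc (0 : ℝ) h₀, U y < c)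
    (b₁ : ℝ → ℝ) (hb₁ : ContDiff ℝ 1 b₁)
    (fr : ℝ → ℝ) (hfr : fr = fun y => ∫ z in (0 : ℝ)..y, 1 / (U z - c) ^ 2)
    (u₁ v₁ p₁ : ℝ → ℝ → ℝ)
    (hu₁ : u₁ = fun x y => -(b₁ x) * (deriv U y * fr y + 1 / (U y - c)))
    (hv₁ : v₁ = fun x y => deriv b₁ x * (U y - c) * fr y)
    (hp₁ : p₁ = fun x y => b₁ x) :
    (∀ x : ℝ, ∀ y ∈ Set.Ioo (0 : ℝ) h₀,
      (U y - c) * pdX u₁ x y + deriv U y * v₁ x y = -(pdX p₁ x y)) ∧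
    (∀ x : ℝ, ∀ y ∈ Set.Ioo (0 : ℝ) h₀, pdY p₁ x y = 0) ∧
    (∀ x : ℝ, ∀ y ∈ Set.Ioo (0 : ℝ) h₀, pdX u₁ x y + pdY v₁ x y = 0) ∧
    (∀ x : ℝ, v₁ x 0 = 0) ∧
    ((∫ y in (0 : ℝ)..h₀, 1 / (U y - c) ^ 2) = 1 / g →
      ∀ η₁ : ℝ → ℝ, η₁ = (fun x => b₁ x / g) →
      ∀ x : ℝ, v₁ x h₀ = (U h₀ - c) * deriv η₁ x) := by
  have hb₁d : Differentiable ℝ b₁ := hb₁.differentiable one_ne_zero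
  have hUne : ∀ y ∈ Set.Icc (0 : ℝ) h₀, U y - c ≠ 0 := fun y hy =>
    sub_ne_zero.mpr (ne_of_lt (hc y hy))
  -- continuity of the integrand on Icc
  have hfcont : ContinuousOn (fun z => 1 / (U z - c) ^ 2) (Set.Icc 0 h₀) := by
    apply ContinuousOn.div continuousOn_const
      (((hU.continuousOn).sub continuousOn_const).pow 2)
    intro z hz
    exact pow_ne_zero 2 (hUne z hz)
  -- derivative of pdX u₁
  have hpdXu : ∀ x y : ℝ,
      pdX u₁ x y = -(deriv b₁ x) * (deriv U y * fr y + 1 / (U y - c)) := by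
    intro x y
    subst hu₁
    unfold pdX
    have : (deriv fun t => -(b₁ t) * (deriv U y * fr y + 1 / (U y - c))) x
        = deriv (fun t => -(b₁ t)) x * (deriv U y * fr y + 1 / (U y - c)) := by
      apply deriv_mul_const ((hb₁d x).neg)
    rw [this, show (fun t => -(b₁ t)) = -b₁ from rfl, deriv.neg]
  have hpdXp : ∀ x y : ℝ, pdX p₁ x y = deriv b₁ x := by
    intro x y; subst hp₁; rfl
  refine ⟨?_, ?_, ?_, ?_, ?_⟩
  · intro x y hy
    have hyI : y ∈ Set.Icc (0 : ℝ) h₀ := ⟨hy.1.le, hy.2.le⟩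
    rw [hpdXu, hpdXp, hv₁]
    have h1 : U y - c ≠ 0 := hUne y hyI
    field_simp
    ring
  · intro x y hy
    subst hp₁
    unfold pdY
    simp
  · intro x y hy
    have hyI : y ∈ Set.Icc (0 : ℝ) h₀ := ⟨hy.1.le, hy.2.le⟩
    have hnhds : Set.Icc (0 : ℝ) h₀ ∈ nhds y := Icc_mem_nhds hy.1 hy.2
    have h1 : U y - c ≠ 0 := hUne y hyI
    -- U differentiable at y
    have hUy : HasDerivAt U (deriv U y) y := by
      have := ((hU.differentiableOn one_ne_zero) y hyI).differentiableAt hnhds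
      exact this.hasDerivAt
    -- fr differentiable at y with derivative 1/(U y - c)^2
    have hfr' : HasDerivAt fr (1 / (U y - c) ^ 2) y := by
      subst hfr
      apply intervalIntegral.integral_hasDerivAt_right
      · apply ContinuousOn.intervalIntegrable
        apply hfcont.mono
        rw [Set.uIcc_of_le hy.1.le]
        exact Set.Icc_subset_Icc le_rfl hy.2.le
      · exact ⟨Set.Icc 0 h₀, hnhds, hfcont.aestronglyMeasurable measurableSet_Icc⟩
      · exact (hfcont y hyI).continuousAt hnhds
    -- pdY v₁
    have hv : HasDerivAt (fun t => deriv b₁ x * (U t - c) * fr t)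
        (deriv b₁ x * ((deriv U y) * fr y + (U y - c) * (1 / (U y - c) ^ 2))) y := by
      have h2 : HasDerivAt (fun t => (U t - c) * fr t)
          ((deriv U y) * fr y + (U y - c) * (1 / (U y - c) ^ 2)) y :=
        (hUy.sub_const c).mul hfr'
      have h3 := h2.const_mul (deriv b₁ x)
      simpa [mul_assoc] using h3
    have hpdYv : pdY v₁ x y
        = deriv b₁ x * ((deriv U y) * fr y + (U y - c) * (1 / (U y - c) ^ 2)) := by
      subst hv₁; unfold pdY; exact hv.deriv
    rw [hpdXu, hpdYv]
    field_simp
    ring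
  · intro x
    subst hv₁ hfr
    simp
  · intro hBurns η₁ hη₁ x
    subst hv₁ hfr hη₁
    simp only
    rw [hBurns]
    have : deriv (fun x => b₁ x / g) x = deriv b₁ x / g := deriv_div_const _
    rw [this]
    field_simp
end
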